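/- Let R be a unique factorization domain and let A = [[x₁, ..., xₙ],[y₁, ..., yₙ]] be a 2×n matrix over R with all 2×2 minors zero and A ≠ 0. Then there exist elements p, q ∈ R and a 1×n matrix [y₁', ..., yₙ'] over R such that A = [[q],[p]]·[y₁' ⋯ yₙ'], i.e. xⱼ = q·yⱼ' and yⱼ = p·yⱼ' for all j. -/

import Mathlib

/-- Over a UFD, a nonzero `2 × n` matrix with all `2 × 2` minors zero factors as a
column times a row. -/
theorem two_by_n_inner_rank_one (R : Type*) [CommRing R] [IsDomain R]
    [UniqueFactorizationMonoid R] (n : ℕ) (x y : Fin n → R)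
    (hminors : ∀ i j, x i * y j = x j * y i) (hne : x ≠ 0 ∨ y ≠ 0) :
    ∃ (p q : R) (y' : Fin n → R),
      (∀ j, x j = q * y' j) ∧ (∀ j, y j = p * y' j) := by
  classical
  by_cases hx : x = 0
  · exact ⟨1, 0, y, fun j => by simp [hx], fun j => by simp⟩
  obtain ⟨k, hk⟩ := Function.ne_iff.mp hx
  rw [Pi.zero_apply] at hk
  letI : NormalizationMonoid R := UniqueFactorizationMonoid.normalizationMonoid.toNormalizationMonoid
  letI : NormalizedGCDMonoid R := UniqueFactorizationMonoid.toNormalizedGCDMonoid R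
  obtain ⟨q, p, hqx, hpy, hu⟩ := extract_gcd (x k) (y k)
  set d := gcd (x k) (y k) with hd
  have hd0 : d ≠ 0 := fun h => hk (by rw [hqx, h, zero_mul])
  have hq0 : q ≠ 0 := fun h => hk (by rw [hqx, h, mul_zero])
  have hrel : IsRelPrime q p := gcd_isUnit_iff_isRelPrime.mp hu
  -- key: for each j, q * y j = p * x j
  have key : ∀ j, q * y j = p * x j := by
    intro j
    have h := hminors k j
    rw [hqx, hpy] at h
    -- (d * q) * y j = x j * (d * p)
    apply mul_left_cancel₀ hd0
    ring_nf
    ring_nf at h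
    linear_combination h
  have hdvd : ∀ j, q ∣ x j := fun j =>
    hrel.dvd_of_dvd_mul_left ⟨y j, (key j).symm⟩
  refine ⟨p, q, fun j => (hdvd j).choose, fun j => (hdvd j).choose_spec, fun j => ?_⟩
  apply mul_left_cancel₀ hq0
  rw [key j, (hdvd j).choose_spec]
  ring
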